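/- For every inverse temperature β ∈ ℝ, every Hermitian d×d Hamiltonian H₁ with Gibbs state ρ₁ = exp(−βH₁)/Tr[exp(−βH₁)], every pair of d×d unitary matrices U, V, and every unital quantum channel Φ, the average entropy production of the undephased quantum unital Otto cycle is nonnegative: β(Tr[V Φ(U ρ₁ U†) V† H₁] − Tr[ρ₁ H₁]) ≥ 0. In particular, for β ≥ 0 the average heat exchanged with the cold bath ⟨Q_C⟩ := Tr[ρ₁ H₁] − Tr[V Φ(U ρ₁ U†) V† H₁] satisfies ⟨Q_C⟩ ≤ 0, so the cycle can never work as a refrigerator, for any finite dimension d. -/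

import Mathlib

open Matrix

private lemma otto_key {d : ℕ} [Nonempty (Fin d)] (D : Fin d → Fin d → ℝ)
    (hD : ∀ i j, 0 ≤ D i j)
    (hrow : ∀ i, ∑ j, D i j = 1) (hcol : ∀ j, ∑ i, D i j = 1)
    (a : Fin d → ℝ) :
    0 ≤ ∑ i, ∑ j, D i j * Real.exp (-a j) * (a i - a j) := by
  have h2 : ∑ i, ∑ j, D i j * (Real.exp (-a j) - Real.exp (-a i)) = 0 := by
    have e1 : ∑ i, ∑ j, D i j * Real.exp (-a j) = ∑ j, Real.exp (-a j) := by
      rw [Finset.sum_comm]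
      refine Finset.sum_congr rfl fun j _ => ?_
      rw [← Finset.sum_mul, hcol j, one_mul]
    have e2 : ∑ i, ∑ j, D i j * Real.exp (-a i) = ∑ i, Real.exp (-a i) := by
      refine Finset.sum_congr rfl fun i _ => ?_
      rw [← Finset.sum_mul, hrow i, one_mul]
    simp only [mul_sub, Finset.sum_sub_distrib]
    rw [e1, e2, sub_self]
  calc (0:ℝ) = ∑ i, ∑ j, D i j * (Real.exp (-a j) - Real.exp (-a i)) := h2.symm
    _ ≤ ∑ i, ∑ j, D i j * Real.exp (-a j) * (a i - a j) := by
      refine Finset.sum_le_sum fun i _ => Finset.sum_le_sum fun j _ => ?_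
      have hexp : Real.exp (a j - a i) * Real.exp (-a j) = Real.exp (-a i) := by
        rw [← Real.exp_add]; ring_nf
      have h1 := Real.add_one_le_exp (a j - a i)
      have base : Real.exp (-a j) - Real.exp (-a i)
          ≤ Real.exp (-a j) * (a i - a j) := by
        nlinarith [Real.exp_pos (-a j), mul_le_mul_of_nonneg_right h1 (Real.exp_pos (-a j)).le]
      calc D i j * (Real.exp (-a j) - Real.exp (-a i))
          ≤ D i j * (Real.exp (-a j) * (a i - a j)) := mul_le_mul_of_nonneg_left base (hD i j)
        _ = D i j * Real.exp (-a j) * (a i - a j) := (mul_assoc _ _ _).symm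

/-- For every inverse temperature `β ∈ ℝ`, every Hermitian `d × d`
Hamiltonian `H₁` with Gibbs state `ρ₁ = exp (−β H₁) / Tr (exp (−β H₁))`, every pair of
unitaries `U, V` and every unital quantum channel `Φ` (given by Kraus operators `Kr k` with
`∑ k, (Kr k)ᴴ * Kr k = 1` and `∑ k, Kr k * (Kr k)ᴴ = 1`), the average entropy production of the
undephased quantum unital Otto cycle is nonnegative:
`β (Tr[V Φ(U ρ₁ Uᴴ) Vᴴ H₁] − Tr[ρ₁ H₁]) ≥ 0`.  In particular, for `β ≥ 0` the average heat
exchanged with the cold bath `⟨Q_C⟩ := Tr[ρ₁ H₁] − Tr[V Φ(U ρ₁ Uᴴ) Vᴴ H₁]` satisfies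
`⟨Q_C⟩ ≤ 0`: the cycle can never work as a refrigerator, in any finite dimension `d`. -/
theorem undephased_no_refrigerator
    {d : ℕ} (hd : 1 ≤ d) (β : ℝ)
    (H₁ : Matrix (Fin d) (Fin d) ℂ) (hH₁ : H₁.IsHermitian)
    (ρ₁ : Matrix (Fin d) (Fin d) ℂ)
    (hρ₁ : ρ₁ = ((NormedSpace.exp (-(β : ℂ) • H₁)).trace)⁻¹ •
        NormedSpace.exp (-(β : ℂ) • H₁))
    (U V : Matrix (Fin d) (Fin d) ℂ)
    (hU : Uᴴ * U = 1) (hU' : U * Uᴴ = 1)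
    (hV : Vᴴ * V = 1) (hV' : V * Vᴴ = 1)
    {K : ℕ} (Kr : Fin K → Matrix (Fin d) (Fin d) ℂ)
    (hKr : ∑ k, (Kr k)ᴴ * Kr k = 1) (hKr' : ∑ k, Kr k * (Kr k)ᴴ = 1)
    (Φ : Matrix (Fin d) (Fin d) ℂ → Matrix (Fin d) (Fin d) ℂ)
    (hΦ : ∀ X, Φ X = ∑ k, Kr k * X * (Kr k)ᴴ) :
    0 ≤ β * (((V * Φ (U * ρ₁ * Uᴴ) * Vᴴ * H₁).trace).re - ((ρ₁ * H₁).trace).re) ∧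
      (0 ≤ β →
        ((ρ₁ * H₁).trace).re - ((V * Φ (U * ρ₁ * Uᴴ) * Vᴴ * H₁).trace).re ≤ 0) := by
  classical
  haveI : Nonempty (Fin d) := Fin.pos_iff_nonempty.mp hd
  set W : Matrix (Fin d) (Fin d) ℂ := (hH₁.eigenvectorUnitary : Matrix (Fin d) (Fin d) ℂ) with hWdef
  set E : Fin d → ℝ := hH₁.eigenvalues with hEdef
  have hWW' : W * Wᴴ = 1 := by
    simpa [Matrix.star_eq_conjTranspose] using (Matrix.mem_unitaryGroup_iff.mp hH₁.eigenvectorUnitary.2)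
  have hWW : Wᴴ * W = 1 := by
    simpa [Matrix.star_eq_conjTranspose] using (Matrix.mem_unitaryGroup_iff'.mp hH₁.eigenvectorUnitary.2)
  have hspec : H₁ = W * diagonal (fun i => (E i : ℂ)) * Wᴴ := by
    exact hH₁.spectral_theorem
  have hWu : IsUnit W := ⟨⟨W, Wᴴ, hWW', hWW⟩, rfl⟩
  have hWinv : W⁻¹ = Wᴴ := Matrix.inv_eq_right_inv hWW'
  set q : Fin d → ℝ := fun i => Real.exp (-(β * E i)) with hqdef
  have hsmul : -(β:ℂ) • H₁ = W * diagonal (-(β:ℂ) • fun i => (E i:ℂ)) * Wᴴ := by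
    rw [hspec, Matrix.diagonal_smul, Matrix.mul_smul, Matrix.smul_mul]
  have hfun : NormedSpace.exp (-(β:ℂ) • fun i : Fin d => (E i:ℂ))
      = fun i => (q i : ℂ) := by
    funext i
    rw [Pi.coe_exp, Pi.smul_apply, smul_eq_mul, ← Complex.exp_eq_exp_ℂ, hqdef]
    rw [show -(β:ℂ) * (E i:ℂ) = ((-(β * E i) : ℝ) : ℂ) by push_cast; ring, ← Complex.ofReal_exp]
  have hexp : NormedSpace.exp (-(β:ℂ) • H₁)
      = W * diagonal (fun i => (q i : ℂ)) * Wᴴ := by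
    rw [hsmul, ← hWinv, Matrix.exp_conj W _ hWu, Matrix.exp_diagonal, hWinv, hfun]
  -- cancellation helpers
  have canWW : ∀ X : Matrix (Fin d) (Fin d) ℂ, Wᴴ * (W * X) = X := fun X => by
    rw [← Matrix.mul_assoc, hWW, Matrix.one_mul]
  have canWW' : ∀ X : Matrix (Fin d) (Fin d) ℂ, W * (Wᴴ * X) = X := fun X => by
    rw [← Matrix.mul_assoc, hWW', Matrix.one_mul]
  have canV : ∀ X : Matrix (Fin d) (Fin d) ℂ, Vᴴ * (V * X) = X := fun X => by
    rw [← Matrix.mul_assoc, hV, Matrix.one_mul]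
  have canU' : ∀ X : Matrix (Fin d) (Fin d) ℂ, U * (Uᴴ * X) = X := fun X => by
    rw [← Matrix.mul_assoc, hU', Matrix.one_mul]
  have trace_conj : ∀ A : Matrix (Fin d) (Fin d) ℂ, (W * A * Wᴴ).trace = A.trace := fun A => by
    rw [Matrix.trace_mul_cycle, hWW, Matrix.one_mul]
  set Z : ℝ := ∑ i, q i with hZdef
  have hZpos : 0 < Z := Finset.sum_pos (fun i _ => Real.exp_pos _) Finset.univ_nonempty
  have htrZ : (NormedSpace.exp (-(β:ℂ) • H₁)).trace = (Z:ℂ) := by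
    rw [hexp, trace_conj, Matrix.trace_diagonal, hZdef]
    push_cast
    rfl
  have hρ : ρ₁ = (Z:ℂ)⁻¹ • (W * diagonal (fun i => (q i:ℂ)) * Wᴴ) := by
    rw [hρ₁, htrZ, hexp]
  -- total Kraus operators
  set M : Fin K → Matrix (Fin d) (Fin d) ℂ := fun k => V * Kr k * U with hMdef
  set N : Fin K → Matrix (Fin d) (Fin d) ℂ := fun k => Wᴴ * M k * W with hNdef
  have hMsum : ∑ k, (M k)ᴴ * M k = 1 := by
    have hMk : ∀ k, (M k)ᴴ * M k = Uᴴ * ((Kr k)ᴴ * Kr k) * U := fun k => by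
      simp only [hMdef, conjTranspose_mul, Matrix.mul_assoc, canV]
    simp only [hMk]
    rw [show ∑ k, Uᴴ * ((Kr k)ᴴ * Kr k) * U = Uᴴ * (∑ k, (Kr k)ᴴ * Kr k) * U from by
      rw [Finset.mul_sum, Finset.sum_mul], hKr, Matrix.mul_one, hU]
  have hMsum' : ∑ k, M k * (M k)ᴴ = 1 := by
    have hMk' : ∀ k, M k * (M k)ᴴ = V * (Kr k * (Kr k)ᴴ) * Vᴴ := fun k => by
      simp only [hMdef, conjTranspose_mul, Matrix.mul_assoc, canU']
    simp only [hMk']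
    rw [show ∑ k, V * (Kr k * (Kr k)ᴴ) * Vᴴ = V * (∑ k, Kr k * (Kr k)ᴴ) * Vᴴ from by
      rw [Finset.mul_sum, Finset.sum_mul], hKr', Matrix.mul_one, hV']
  have hNk : ∀ k, (N k)ᴴ = Wᴴ * (M k)ᴴ * W := fun k => by
    simp only [hNdef, conjTranspose_mul, conjTranspose_conjTranspose, Matrix.mul_assoc]
  have hNsum : ∑ k, (N k)ᴴ * N k = 1 := by
    have e : ∀ k, (N k)ᴴ * N k = Wᴴ * ((M k)ᴴ * M k) * W := fun k => by
      rw [hNk]; simp only [hNdef, Matrix.mul_assoc, canWW']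
    simp only [e]
    rw [show ∑ k, Wᴴ * ((M k)ᴴ * M k) * W = Wᴴ * (∑ k, (M k)ᴴ * M k) * W from by
      rw [Finset.mul_sum, Finset.sum_mul], hMsum, Matrix.mul_one, hWW]
  have hNsum' : ∑ k, N k * (N k)ᴴ = 1 := by
    have e : ∀ k, N k * (N k)ᴴ = Wᴴ * (M k * (M k)ᴴ) * W := fun k => by
      rw [hNk]; simp only [hNdef, Matrix.mul_assoc, canWW']
    simp only [e]
    rw [show ∑ k, Wᴴ * (M k * (M k)ᴴ) * W = Wᴴ * (∑ k, M k * (M k)ᴴ) * W from by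
      rw [Finset.mul_sum, Finset.sum_mul], hMsum', Matrix.mul_one, hWW]
  -- doubly stochastic matrix
  set Dm : Fin d → Fin d → ℝ := fun i j => ∑ k, Complex.normSq (N k i j) with hDmdef
  have hDnn : ∀ i j, 0 ≤ Dm i j := fun i j =>
    Finset.sum_nonneg fun k _ => Complex.normSq_nonneg _
  have hcol : ∀ j, ∑ i, Dm i j = 1 := by
    intro j
    have h := congrArg (fun A : Matrix (Fin d) (Fin d) ℂ => A j j) hNsum
    simp only [Matrix.sum_apply, Matrix.mul_apply, Matrix.conjTranspose_apply,
      Matrix.one_apply_eq] at h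
    have e : ∑ k, ∑ i, star (N k i j) * N k i j = ((∑ i, Dm i j : ℝ) : ℂ) := by
      push_cast [hDmdef]
      rw [Finset.sum_comm]
      refine Finset.sum_congr rfl fun i _ => Finset.sum_congr rfl fun k _ => ?_
      rw [Complex.star_def, ← Complex.normSq_eq_conj_mul_self]
    rw [e] at h
    exact_mod_cast h
  have hrow : ∀ i, ∑ j, Dm i j = 1 := by
    intro i
    have h := congrArg (fun A : Matrix (Fin d) (Fin d) ℂ => A i i) hNsum'
    simp only [Matrix.sum_apply, Matrix.mul_apply, Matrix.conjTranspose_apply,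
      Matrix.one_apply_eq] at h
    have e : ∑ k, ∑ j, N k i j * star (N k i j) = ((∑ j, Dm i j : ℝ) : ℂ) := by
      push_cast [hDmdef]
      rw [Finset.sum_comm]
      refine Finset.sum_congr rfl fun j _ => Finset.sum_congr rfl fun k _ => ?_
      rw [Complex.star_def, Complex.mul_conj]
    rw [e] at h
    exact_mod_cast h
  -- trace computations
  have hy : ((ρ₁ * H₁).trace) = ((Z⁻¹ * ∑ i, q i * E i : ℝ) : ℂ) := by
    rw [hρ, hspec, Matrix.smul_mul, Matrix.trace_smul]
    rw [show (W * diagonal (fun i => (q i:ℂ)) * Wᴴ) * (W * diagonal (fun i => (E i:ℂ)) * Wᴴ)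
        = W * (diagonal (fun i => (q i:ℂ)) * diagonal (fun i => (E i:ℂ))) * Wᴴ from by
      simp only [Matrix.mul_assoc, canWW]]
    rw [Matrix.diagonal_mul_diagonal, trace_conj, Matrix.trace_diagonal]
    push_cast
    rw [smul_eq_mul]
  have entry : ∀ k, (N k * diagonal (fun i => (q i:ℂ)) * (N k)ᴴ * diagonal (fun i => (E i:ℂ))).trace
      = ((∑ i, ∑ j, Complex.normSq (N k i j) * q j * E i : ℝ) : ℂ) := by
    intro k
    push_cast
    rw [Matrix.trace]
    simp only [Matrix.diag_apply, Matrix.mul_diagonal]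
    refine Finset.sum_congr rfl fun i _ => ?_
    rw [Matrix.mul_apply, Finset.sum_mul]
    refine Finset.sum_congr rfl fun j _ => ?_
    rw [Matrix.mul_diagonal, Matrix.conjTranspose_apply, Complex.star_def,
      show N k i j * (q j:ℂ) * (starRingEnd ℂ) (N k i j) * (E i:ℂ)
        = (N k i j * (starRingEnd ℂ) (N k i j)) * (q j:ℂ) * (E i:ℂ) from by ring,
      Complex.mul_conj]
  have tr_term : ∀ k, (M k * ((Z:ℂ)⁻¹ • (W * diagonal (fun i => (q i:ℂ)) * Wᴴ)) * (M k)ᴴ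
      * (W * diagonal (fun i => (E i:ℂ)) * Wᴴ)).trace
      = (Z:ℂ)⁻¹ * ((∑ i, ∑ j, Complex.normSq (N k i j) * q j * E i : ℝ) : ℂ) := by
    intro k
    rw [Matrix.mul_smul, Matrix.smul_mul, Matrix.smul_mul, Matrix.trace_smul, smul_eq_mul]
    congr 1
    rw [← entry k]
    rw [hNk]
    rw [show Wᴴ * M k * W * diagonal (fun i => (q i:ℂ)) * (Wᴴ * (M k)ᴴ * W)
        * diagonal (fun i => (E i:ℂ))
        = Wᴴ * (M k * (W * (diagonal (fun i => (q i:ℂ)) * (Wᴴ * ((M k)ᴴ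
          * (W * diagonal (fun i => (E i:ℂ)))))))) from by simp only [Matrix.mul_assoc]]
    rw [Matrix.trace_mul_comm Wᴴ]
    simp only [Matrix.mul_assoc]
  have hx : ((V * Φ (U * ρ₁ * Uᴴ) * Vᴴ * H₁).trace)
      = ((Z⁻¹ * ∑ i, ∑ j, Dm i j * q j * E i : ℝ) : ℂ) := by
    rw [hΦ]
    have step1 : V * (∑ k, Kr k * (U * ρ₁ * Uᴴ) * (Kr k)ᴴ) * Vᴴ * H₁
        = ∑ k, M k * ρ₁ * (M k)ᴴ * H₁ := by
      rw [Finset.mul_sum, Finset.sum_mul, Finset.sum_mul]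
      refine Finset.sum_congr rfl fun k _ => ?_
      simp only [hMdef, conjTranspose_mul, Matrix.mul_assoc]
    rw [step1, Matrix.trace_sum]
    have : ∀ k, (M k * ρ₁ * (M k)ᴴ * H₁).trace
        = (Z:ℂ)⁻¹ * ((∑ i, ∑ j, Complex.normSq (N k i j) * q j * E i : ℝ) : ℂ) := fun k => by
      rw [hρ, hspec]; exact tr_term k
    rw [Finset.sum_congr rfl fun k _ => this k]
    rw [← Finset.mul_sum]
    have hreal : ∑ k, ∑ i, ∑ j, Complex.normSq (N k i j) * q j * E i
        = ∑ i, ∑ j, Dm i j * q j * E i := by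
      rw [Finset.sum_comm]
      refine Finset.sum_congr rfl fun i _ => ?_
      rw [Finset.sum_comm]
      refine Finset.sum_congr rfl fun j _ => ?_
      rw [hDmdef, Finset.sum_mul, Finset.sum_mul]
    rw [show (∑ k, ((∑ i, ∑ j, Complex.normSq (N k i j) * q j * E i : ℝ) : ℂ))
        = ((∑ k, ∑ i, ∑ j, Complex.normSq (N k i j) * q j * E i : ℝ) : ℂ) from by
      push_cast; rfl]
    rw [hreal]
    push_cast
    ring
  have hxre : ((V * Φ (U * ρ₁ * Uᴴ) * Vᴴ * H₁).trace).re
      = Z⁻¹ * ∑ i, ∑ j, Dm i j * q j * E i := by rw [hx, Complex.ofReal_re]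
  have hyre : ((ρ₁ * H₁).trace).re = Z⁻¹ * ∑ i, q i * E i := by rw [hy, Complex.ofReal_re]
  have hkey := otto_key Dm hDnn hrow hcol (fun i => β * E i)
  beta_reduce at hkey
  have hT : ∑ i, ∑ j, Dm i j * (q j * E j) = ∑ j, q j * E j := by
    rw [Finset.sum_comm]
    refine Finset.sum_congr rfl fun j _ => ?_
    rw [← Finset.sum_mul, hcol j, one_mul]
  have heq : β * ((Z⁻¹ * ∑ i, ∑ j, Dm i j * q j * E i) - Z⁻¹ * ∑ i, q i * E i)
      = Z⁻¹ * ∑ i, ∑ j, Dm i j * Real.exp (-(β * E j)) * (β * E i - β * E j) := by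
    have dmul : ∀ (c : ℝ) (f : Fin d → Fin d → ℝ),
        c * (∑ i, ∑ j, f i j) = ∑ i, ∑ j, c * f i j := fun c f => by
      rw [Finset.mul_sum]; exact Finset.sum_congr rfl fun i _ => Finset.mul_sum _ _ _
    rw [← hT]
    rw [dmul, dmul]
    simp only [← Finset.sum_sub_distrib]
    rw [dmul, dmul]
    refine Finset.sum_congr rfl fun i _ => Finset.sum_congr rfl fun j _ => ?_
    simp only [hqdef]
    ring
  have h0 : 0 ≤ β * (((V * Φ (U * ρ₁ * Uᴴ) * Vᴴ * H₁).trace).re - ((ρ₁ * H₁).trace).re) := by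
    rw [hxre, hyre, heq]
    exact mul_nonneg (inv_nonneg.mpr hZpos.le) hkey
  refine ⟨h0, fun hβ => ?_⟩
  rcases hβ.lt_or_eq with hb | hb
  · nlinarith [h0]
  · rw [hxre, hyre]
    have hq1 : ∀ i, q i = 1 := fun i => by simp [hqdef, ← hb]
    have hST : ∑ i, ∑ j, Dm i j * q j * E i = ∑ i, q i * E i := by
      simp only [hq1, mul_one, one_mul]
      refine Finset.sum_congr rfl fun i _ => ?_
      rw [← Finset.sum_mul, hrow i, one_mul]
    rw [hST]
    simp
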